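/- arXiv:1009.4535 — 2 statements merged into one kernel-verified Lean document; each statement's English description precedes it below -/
import Mathlib

section
/- For all integers n ≥ 3 and 1 ≤ k ≤ n/2, the numbers P(n,k) satisfy the recurrence P(n,k) = P(n-1,k) + (n-k)·P(n-2,k-1), with initial values P(1,0) = 1, P(2,0) = 1, P(2,1) = 1. -/
open Finset

/-- `(i, j)` is an arc of the linear representation of the set partition `P` of
`{1, ..., n}`: `i < j`, both lie in the same block, and no element of that block
lies strictly between them. -/
def IsArc {n : ℕ} (P : Finpartition (Finset.Icc 1 n)) (a : ℕ × ℕ) : Prop :=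
  a.1 < a.2 ∧ ∃ B ∈ P.parts, a.1 ∈ B ∧ a.2 ∈ B ∧ ∀ c ∈ B, ¬ (a.1 < c ∧ c < a.2)

/-- The number of arcs of a set partition. -/
noncomputable def numArcs {n : ℕ} (P : Finpartition (Finset.Icc 1 n)) : ℕ :=
  {a : ℕ × ℕ | IsArc P a}.ncard

/-- A partial matching: every block has at most two elements. -/
def IsMatching {n : ℕ} (P : Finpartition (Finset.Icc 1 n)) : Prop :=
  ∀ B ∈ P.parts, B.card ≤ 2

/-- A neighbor alignment: arcs `(i₁, j₁)`, `(i₂, j₂)` with `i₁ < j₁ < i₂ < j₂`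
and `j₁ + 1 = i₂`. -/
def HasNbrAlign {n : ℕ} (P : Finpartition (Finset.Icc 1 n)) : Prop :=
  ∃ a b : ℕ × ℕ, IsArc P a ∧ IsArc P b ∧ a.2 + 1 = b.1

/-- A left nesting: arcs `(i₁, j₁)`, `(i₂, j₂)` with `i₁ < i₂ < j₂ < j₁`
and `i₁ + 1 = i₂`. -/
def HasLeftNesting {n : ℕ} (P : Finpartition (Finset.Icc 1 n)) : Prop :=
  ∃ a b : ℕ × ℕ, IsArc P a ∧ IsArc P b ∧ a.1 + 1 = b.1 ∧ b.2 < a.2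

/-- A right nesting: arcs `(i₁, j₁)`, `(i₂, j₂)` with `i₁ < i₂ < j₂ < j₁`
and `j₂ + 1 = j₁`. -/
def HasRightNesting {n : ℕ} (P : Finpartition (Finset.Icc 1 n)) : Prop :=
  ∃ a b : ℕ × ℕ, IsArc P a ∧ IsArc P b ∧ a.1 < b.1 ∧ b.2 + 1 = a.2

/-- The number of left crossings: pairs of arcs `(i₁, j₁)`, `(i₂, j₂)` with
`i₁ < i₂ < j₁ < j₂` and `i₁ + 1 = i₂`. -/
noncomputable def numLeftCrossings {n : ℕ} (P : Finpartition (Finset.Icc 1 n)) : ℕ :=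
  {p : (ℕ × ℕ) × (ℕ × ℕ) |
    IsArc P p.1 ∧ IsArc P p.2 ∧ p.1.1 + 1 = p.2.1 ∧ p.2.1 < p.1.2 ∧ p.1.2 < p.2.2}.ncard

/-- The number of transients: elements of a block that are neither the minimum
nor the maximum of their block. -/
noncomputable def numTransients {n : ℕ} (P : Finpartition (Finset.Icc 1 n)) : ℕ :=
  {x : ℕ | ∃ B ∈ P.parts, x ∈ B ∧ (∃ y ∈ B, y < x) ∧ (∃ y ∈ B, x < y)}.ncard

/-- `Pnum n k`: the number of partial matchings of `[n]` with exactly `k` arcs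
and no neighbor alignments. -/
noncomputable def Pnum (n k : ℕ) : ℕ :=
  {P : Finpartition (Finset.Icc 1 n) |
    IsMatching P ∧ numArcs P = k ∧ ¬ HasNbrAlign P}.ncard

/-- `Qnum n k`: the number of partial matchings of `[n]` with exactly `k` arcs,
no neighbor alignments and no left nestings. -/
noncomputable def Qnum (n k : ℕ) : ℕ :=
  {P : Finpartition (Finset.Icc 1 n) |
    IsMatching P ∧ numArcs P = k ∧ ¬ HasNbrAlign P ∧ ¬ HasLeftNesting P}.ncard

/-- `Rnum n k`: the number of partial matchings of `[n]` with exactly `k` arcs,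
no neighbor alignments, no left nestings and no right nestings. -/
noncomputable def Rnum (n k : ℕ) : ℕ :=
  {P : Finpartition (Finset.Icc 1 n) |
    IsMatching P ∧ numArcs P = k ∧ ¬ HasNbrAlign P ∧ ¬ HasLeftNesting P ∧
      ¬ HasRightNesting P}.ncard

/-- `Tnum n k`: the number of set partitions of `[n]` with exactly `k` arcs and
no right nestings. -/
noncomputable def Tnum (n k : ℕ) : ℕ :=
  {P : Finpartition (Finset.Icc 1 n) | numArcs P = k ∧ ¬ HasRightNesting P}.ncard

/-- `Stirling m b`: the Stirling number of the second kind, the number of set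
partitions of `{1, ..., m}` into `b` blocks. -/
noncomputable def Stirling (m b : ℕ) : ℕ :=
  {P : Finpartition (Finset.Icc 1 m) | P.parts.card = b}.ncard


open Finset

namespace PMaux

/-- Valid arc set of a matching on `[n]` with no neighbor alignment. -/
def Valid (n : ℕ) (A : Finset (ℕ × ℕ)) : Prop :=
  (∀ p ∈ A, 1 ≤ p.1 ∧ p.1 < p.2 ∧ p.2 ≤ n) ∧
  (∀ p ∈ A, ∀ q ∈ A, p ≠ q → p.1 ≠ q.1 ∧ p.1 ≠ q.2 ∧ p.2 ≠ q.1 ∧ p.2 ≠ q.2) ∧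
  (∀ p ∈ A, ∀ q ∈ A, p.2 + 1 ≠ q.1)

instance (n : ℕ) : DecidablePred (Valid n) := fun A => by
  unfold Valid; infer_instance

def ArcSets (n k : ℕ) : Finset (Finset (ℕ × ℕ)) :=
  ((Finset.Icc 1 n ×ˢ Finset.Icc 1 n).powerset).filter (fun A => Valid n A ∧ A.card = k)

lemma mem_ArcSets {n k : ℕ} {A : Finset (ℕ × ℕ)} :
    A ∈ ArcSets n k ↔ Valid n A ∧ A.card = k := by
  unfold ArcSets
  simp only [mem_filter, mem_powerset, and_iff_right_iff_imp]
  rintro ⟨⟨h1, _, _⟩, _⟩ p hp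
  have := h1 p hp
  simp only [mem_product, mem_Icc]
  omega

end PMaux

namespace PMaux

def sh (i x : ℕ) : ℕ := if x < i then x else x + 1
def us (i x : ℕ) : ℕ := if x < i then x else x - 1
def shp (i : ℕ) (p : ℕ × ℕ) : ℕ × ℕ := (sh i p.1, sh i p.2)
def usp (i : ℕ) (p : ℕ × ℕ) : ℕ × ℕ := (us i p.1, us i p.2)

lemma sh_ne (i x : ℕ) : sh i x ≠ i := by unfold sh; split <;> omega

lemma sh_inj (i : ℕ) : Function.Injective (sh i) := by
  intro x y; unfold sh; split_ifs <;> omega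

lemma shp_inj (i : ℕ) : Function.Injective (shp i) := by
  intro p q h
  have h1 := congrArg Prod.fst h
  have h2 := congrArg Prod.snd h
  simp only [shp] at h1 h2
  exact Prod.ext (sh_inj i h1) (sh_inj i h2)

lemma us_sh (i x : ℕ) : us i (sh i x) = x := by unfold sh us; split_ifs <;> omega

lemma sh_us {i x : ℕ} (h : x ≠ i) : sh i (us i x) = x := by
  unfold sh us; split_ifs <;> omega

/-- the partner of `n`. -/
def pt (A : Finset (ℕ × ℕ)) (n : ℕ) : ℕ := ((A.filter (fun p => p.2 = n)).sup Prod.fst)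

def ins (n i : ℕ) (M : Finset (ℕ × ℕ)) : Finset (ℕ × ℕ) :=
  insert (i, n) (M.image (shp i))

def del (n : ℕ) (A : Finset (ℕ × ℕ)) : Finset (ℕ × ℕ) :=
  (A.erase (pt A n, n)).image (usp (pt A n))

lemma pt_eq {n i : ℕ} {A : Finset (ℕ × ℕ)} (hV : Valid n A) (hi : (i, n) ∈ A) :
    pt A n = i := by
  have : A.filter (fun p => p.2 = n) = {(i, n)} := by
    apply Finset.ext
    intro q
    simp only [mem_filter, mem_singleton]
    constructor
    · rintro ⟨hq, hq2⟩
      by_contra hne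
      have := (hV.2.1 q hq (i, n) hi hne).2.2.2
      simp at this; omega
    · rintro rfl; exact ⟨hi, rfl⟩
  rw [pt, this]
  simp

/-- uniqueness: the arc ending at n -/
lemma arc_at_n {n : ℕ} {A : Finset (ℕ × ℕ)} (hV : Valid n A) {q : ℕ × ℕ}
    (hq : q ∈ A) (h2 : q.2 = n) (hi : (pt A n, n) ∈ A) : q = (pt A n, n) := by
  by_contra hne
  have := (hV.2.1 q hq _ hi hne).2.2.2
  simp at this; omega

end PMaux

namespace PMaux

lemma ins_valid {n k i : ℕ} {M : Finset (ℕ × ℕ)} (hn : 3 ≤ n) (hk : 1 ≤ k)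
    (hV : Valid (n - 2) M) (hc : M.card = k - 1)
    (hi1 : 1 ≤ i) (hi2 : i ≤ n - 1) (hfree : ∀ p ∈ M, p.2 + 1 ≠ i) :
    Valid n (ins n i M) ∧ (ins n i M).card = k := by
  obtain ⟨hB, hD, hN⟩ := hV
  -- basic facts about image elements
  have himg : ∀ q ∈ M.image (shp i), ∃ p ∈ M, q = shp i p := by
    intro q hq
    obtain ⟨p, hp, rfl⟩ := Finset.mem_image.1 hq
    exact ⟨p, hp, rfl⟩
  have hshlt : ∀ x, x ≤ n - 2 → sh i x ≤ n - 1 := by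
    intro x hx; unfold sh; split <;> omega
  have hshge : ∀ x, 1 ≤ x → 1 ≤ sh i x := by
    intro x hx; unfold sh; split <;> omega
  have hshmono : ∀ x y, x < y → sh i x < sh i y := by
    intro x y h; unfold sh; split_ifs <;> omega
  have hnotmem : (i, n) ∉ M.image (shp i) := by
    intro h
    obtain ⟨p, hp, he⟩ := himg _ h
    have := hB p hp
    have h2 := congrArg Prod.snd he
    simp only [shp] at h2
    have := hshlt p.2 this.2.2
    omega
  constructor
  · refine ⟨?_, ?_, ?_⟩
    · intro p hp
      rcases Finset.mem_insert.1 hp with rfl | hp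
      · exact ⟨hi1, by omega, le_refl n⟩
      · obtain ⟨q, hq, rfl⟩ := himg _ hp
        have hb := hB q hq
        have h1 := hshge q.1 hb.1
        have h2 := hshmono _ _ hb.2.1
        have h3 := hshlt q.2 hb.2.2
        simp only [shp]
        omega
    · intro p hp q hq hne
      rcases Finset.mem_insert.1 hp with rfl | hp <;>
        rcases Finset.mem_insert.1 hq with rfl | hq
      · exact absurd rfl hne
      · obtain ⟨q', hq', rfl⟩ := himg _ hq
        have hb := hB q' hq'
        have hlt := hshlt q'.2 hb.2.2
        have hlt1 := hshlt q'.1 (by omega)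
        exact ⟨(sh_ne i q'.1).symm, (sh_ne i q'.2).symm, by simp [shp]; omega,
          by simp [shp]; omega⟩
      · obtain ⟨p', hp', rfl⟩ := himg _ hp
        have hb := hB p' hp'
        have hlt := hshlt p'.2 hb.2.2
        have hlt1 := hshlt p'.1 (by omega)
        exact ⟨sh_ne i p'.1, by simp [shp]; omega, sh_ne i p'.2, by simp [shp]; omega⟩
      · obtain ⟨p', hp', rfl⟩ := himg _ hp
        obtain ⟨q', hq', rfl⟩ := himg _ hq
        have hne' : p' ≠ q' := fun h => hne (by rw [h])
        have := hD p' hp' q' hq' hne'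
        refine ⟨fun h => this.1 (sh_inj i h), fun h => this.2.1 (sh_inj i h),
          fun h => this.2.2.1 (sh_inj i h), fun h => this.2.2.2 (sh_inj i h)⟩
    · intro p hp q hq
      rcases Finset.mem_insert.1 hp with rfl | hp <;>
        rcases Finset.mem_insert.1 hq with rfl | hq
      · simp; omega
      · obtain ⟨q', hq', rfl⟩ := himg _ hq
        have hb := hB q' hq'
        have := hshlt q'.1 (by omega)
        simp only [shp]; omega
      · obtain ⟨p', hp', rfl⟩ := himg _ hp
        have hb := hB p' hp'
        simp only [shp]
        -- sh i p'.2 + 1 = i is impossible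
        have hf := hfree p' hp'
        unfold sh; split <;> omega
      · obtain ⟨p', hp', rfl⟩ := himg _ hp
        obtain ⟨q', hq', rfl⟩ := himg _ hq
        simp only [shp]
        have h1 := hN p' hp' q' hq'
        have hb := hB p' hp'
        have hb' := hB q' hq'
        unfold sh; split_ifs <;> omega
  · rw [ins, Finset.card_insert_of_notMem hnotmem,
      Finset.card_image_of_injective _ (shp_inj i), hc]
    omega

end PMaux

namespace PMaux

lemma del_valid {n k i : ℕ} {A : Finset (ℕ × ℕ)} (hn : 3 ≤ n) (hk : 1 ≤ k)
    (hV : Valid n A) (hc : A.card = k) (hiA : (i, n) ∈ A) :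
    Valid (n - 2) (del n A) ∧ (del n A).card = k - 1 ∧
      1 ≤ i ∧ i ≤ n - 1 ∧ ∀ p ∈ del n A, p.2 + 1 ≠ i := by
  obtain ⟨hB, hD, hN⟩ := hV
  have hpt : pt A n = i := pt_eq ⟨hB, hD, hN⟩ hiA
  have hbi := hB _ hiA
  simp only at hbi
  have hi1 : 1 ≤ i := hbi.1
  have hi2 : i ≤ n - 1 := by omega
  -- facts about elements of the erased set
  have hE : ∀ p ∈ A.erase (i, n), p ∈ A ∧ p.1 ≠ i ∧ p.2 ≠ i ∧ p.1 ≠ n ∧ p.2 ≠ n ∧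
      1 ≤ p.1 ∧ p.1 < p.2 ∧ p.2 ≤ n - 1 := by
    intro p hp
    have hpA := Finset.mem_of_mem_erase hp
    have hpne := Finset.ne_of_mem_erase hp
    have hd := hD p hpA (i, n) hiA hpne
    simp only at hd
    have hb := hB p hpA
    exact ⟨hpA, hd.1, hd.2.2.1, hd.2.1, hd.2.2.2, hb.1, hb.2.1, by omega⟩
  have husm : ∀ x y, x ≠ i → y ≠ i → x < y → us i x < us i y := by
    intro x y hx hy h; unfold us; split_ifs <;> omega
  have husinj : ∀ x y, x ≠ i → y ≠ i → us i x = us i y → x = y := by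
    intro x y hx hy; unfold us; split_ifs <;> omega
  have husbd : ∀ x, x ≠ i → 1 ≤ x → x ≤ n - 1 → 1 ≤ us i x ∧ us i x ≤ n - 2 := by
    intro x hx h1 h2; unfold us; split_ifs <;> omega
  rw [del, hpt]
  refine ⟨⟨?_, ?_, ?_⟩, ?_, hi1, hi2, ?_⟩
  · intro p hp
    obtain ⟨q, hq, rfl⟩ := Finset.mem_image.1 hp
    obtain ⟨_, h1, h2, _, _, h5, h6, h7⟩ := hE q hq
    have b1 := husbd q.1 h1 h5 (by omega)
    have b2 := husbd q.2 h2 (by omega) h7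
    have := husm q.1 q.2 h1 h2 h6
    simp only [usp]
    omega
  · intro p hp q hq hne
    obtain ⟨p', hp', rfl⟩ := Finset.mem_image.1 hp
    obtain ⟨q', hq', rfl⟩ := Finset.mem_image.1 hq
    obtain ⟨hp'A, hp1, hp2, _, _, _, _, _⟩ := hE p' hp'
    obtain ⟨hq'A, hq1, hq2, _, _, _, _, _⟩ := hE q' hq'
    have hne' : p' ≠ q' := fun h => hne (by rw [h])
    have hd := hD p' hp'A q' hq'A hne'
    simp only [usp]
    exact ⟨fun h => hd.1 (husinj _ _ hp1 hq1 h), fun h => hd.2.1 (husinj _ _ hp1 hq2 h),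
      fun h => hd.2.2.1 (husinj _ _ hp2 hq1 h), fun h => hd.2.2.2 (husinj _ _ hp2 hq2 h)⟩
  · intro p hp q hq
    obtain ⟨p', hp', rfl⟩ := Finset.mem_image.1 hp
    obtain ⟨q', hq', rfl⟩ := Finset.mem_image.1 hq
    obtain ⟨hp'A, hp1, hp2, _, _, _, _, _⟩ := hE p' hp'
    obtain ⟨hq'A, hq1, hq2, _, _, hq5, hq6, _⟩ := hE q' hq'
    simp only [usp]
    have h1 := hN p' hp'A q' hq'A
    -- case analysis: a := p'.2, b := q'.1
    have key : ∀ a b, a ≠ i → b ≠ i → a + 1 ≠ b → ¬(a < i ∧ i < b ∧ b = a + 2) →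
        us i a + 1 ≠ us i b := by
      intro a b ha hb hab hmid; unfold us; split_ifs <;> omega
    apply key _ _ hp2 hq1 h1
    rintro ⟨ha, hb, hab⟩
    -- then i = p'.2 + 1, and (i, n) ∈ A gives an alignment in A
    have := hN p' hp'A (i, n) hiA
    simp only at this
    omega
  · rw [Finset.card_image_of_injOn, Finset.card_erase_of_mem hiA, hc]
    intro p hp q hq h
    obtain ⟨_, hp1, hp2, _, _, _, _, _⟩ := hE p hp
    obtain ⟨_, hq1, hq2, _, _, _, _, _⟩ := hE q hq
    have h1 := congrArg Prod.fst h
    have h2 := congrArg Prod.snd h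
    simp only [usp] at h1 h2
    exact Prod.ext (husinj _ _ hp1 hq1 h1) (husinj _ _ hp2 hq2 h2)
  · intro p hp
    obtain ⟨q, hq, rfl⟩ := Finset.mem_image.1 hp
    obtain ⟨hqA, _, hq2, _, _, _, _, _⟩ := hE q hq
    simp only [usp]
    have := hN q hqA (i, n) hiA
    simp only at this
    unfold us; split <;> omega

end PMaux

namespace PMaux

lemma del_ins {n k i : ℕ} {M : Finset (ℕ × ℕ)} (hn : 3 ≤ n) (hk : 1 ≤ k)
    (hV : Valid (n - 2) M) (hc : M.card = k - 1)
    (hi1 : 1 ≤ i) (hi2 : i ≤ n - 1) (hfree : ∀ p ∈ M, p.2 + 1 ≠ i) :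
    pt (ins n i M) n = i ∧ del n (ins n i M) = M := by
  have hIV := (ins_valid hn hk hV hc hi1 hi2 hfree).1
  have hmem : (i, n) ∈ ins n i M := Finset.mem_insert_self _ _
  have hpt : pt (ins n i M) n = i := pt_eq hIV hmem
  refine ⟨hpt, ?_⟩
  rw [del, hpt]
  have herase : (ins n i M).erase (i, n) = M.image (shp i) := by
    rw [ins, Finset.erase_insert]
    intro h
    obtain ⟨p, hp, he⟩ := Finset.mem_image.1 h
    have h2 := congrArg Prod.snd he
    have hb := hV.1 p hp
    simp only [shp, sh] at h2
    split at h2 <;> omega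
  rw [herase, Finset.image_image]
  have : ∀ p ∈ M, (usp i ∘ shp i) p = p := by
    intro p hp
    simp only [Function.comp, usp, shp, us_sh]
  calc M.image (usp i ∘ shp i) = M.image id := Finset.image_congr this
    _ = M := Finset.image_id

lemma ins_del {n k : ℕ} {A : Finset (ℕ × ℕ)} (hn : 3 ≤ n) (hk : 1 ≤ k)
    (hV : Valid n A) (hc : A.card = k) {i : ℕ} (hiA : (i, n) ∈ A) :
    ins n i (del n A) = A := by
  have hpt : pt A n = i := pt_eq hV hiA
  rw [del, hpt, ins, Finset.image_image]
  have hE : ∀ p ∈ A.erase (i, n), p.1 ≠ i ∧ p.2 ≠ i := by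
    intro p hp
    have hpA := Finset.mem_of_mem_erase hp
    have hd := hV.2.1 p hpA (i, n) hiA (Finset.ne_of_mem_erase hp)
    exact ⟨hd.1, hd.2.2.1⟩
  have : ∀ p ∈ A.erase (i, n), (shp i ∘ usp i) p = p := by
    intro p hp
    obtain ⟨h1, h2⟩ := hE p hp
    simp only [Function.comp, shp, usp, sh_us h1, sh_us h2]
  calc insert (i, n) ((A.erase (i, n)).image (shp i ∘ usp i))
      = insert (i, n) (A.erase (i, n)) := by
        rw [Finset.image_congr this]; simp
    _ = A := Finset.insert_erase hiA


end PMaux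
open Finset




namespace PMaux

lemma pair_eq {a b c d : ℕ} (hab : a < b) (hcd : c < d)
    (h : ({a, b} : Finset ℕ) = {c, d}) : a = c ∧ b = d := by
  have ha : a ∈ ({c, d} : Finset ℕ) := h ▸ (by simp)
  have hb : b ∈ ({c, d} : Finset ℕ) := h ▸ (by simp)
  have hc : c ∈ ({a, b} : Finset ℕ) := h ▸ (by simp)
  have hd : d ∈ ({a, b} : Finset ℕ) := h ▸ (by simp)
  simp only [Finset.mem_insert, Finset.mem_singleton] at ha hb hc hd
  omega

lemma isArc_iff {n : ℕ} {P : Finpartition (Finset.Icc 1 n)} (hM : IsMatching P) {p : ℕ × ℕ} :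
    IsArc P p ↔ p.1 < p.2 ∧ ({p.1, p.2} : Finset ℕ) ∈ P.parts := by
  constructor
  · rintro ⟨hlt, B, hB, h1, h2, _⟩
    refine ⟨hlt, ?_⟩
    have hsub : ({p.1, p.2} : Finset ℕ) ⊆ B := by
      intro x hx
      simp only [Finset.mem_insert, Finset.mem_singleton] at hx
      rcases hx with rfl | rfl <;> assumption
    have hcard : ({p.1, p.2} : Finset ℕ).card = 2 := by
      rw [Finset.card_insert_of_notMem (by simp; omega), Finset.card_singleton]
    have := Finset.eq_of_subset_of_card_le hsub (by rw [hcard]; exact hM B hB)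
    rwa [this]
  · rintro ⟨hlt, hB⟩
    refine ⟨hlt, {p.1, p.2}, hB, by simp, by simp, ?_⟩
    intro c hc
    simp only [Finset.mem_insert, Finset.mem_singleton] at hc
    rcases hc with rfl | rfl <;> omega

lemma mem_Icc_of_mem_parts {n : ℕ} {P : Finpartition (Finset.Icc 1 n)} {B : Finset ℕ}
    (hB : B ∈ P.parts) {x : ℕ} (hx : x ∈ B) : 1 ≤ x ∧ x ≤ n := by
  have := P.le hB hx
  simpa using this

def toArcs (n : ℕ) (P : Finpartition (Finset.Icc 1 n)) : Finset (ℕ × ℕ) :=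
  ((Finset.Icc 1 n) ×ˢ (Finset.Icc 1 n)).filter
    (fun p => p.1 < p.2 ∧ ({p.1, p.2} : Finset ℕ) ∈ P.parts)

lemma mem_toArcs {n : ℕ} {P : Finpartition (Finset.Icc 1 n)} {p : ℕ × ℕ} :
    p ∈ toArcs n P ↔ p.1 < p.2 ∧ ({p.1, p.2} : Finset ℕ) ∈ P.parts := by
  unfold toArcs
  simp only [Finset.mem_filter, Finset.mem_product, Finset.mem_Icc, and_iff_right_iff_imp]
  rintro ⟨hlt, hB⟩
  have h1 := mem_Icc_of_mem_parts hB (x := p.1) (by simp)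
  have h2 := mem_Icc_of_mem_parts hB (x := p.2) (by simp)
  omega

lemma isArc_iff_mem {n : ℕ} {P : Finpartition (Finset.Icc 1 n)} (hM : IsMatching P)
    {p : ℕ × ℕ} : IsArc P p ↔ p ∈ toArcs n P := by
  rw [mem_toArcs, isArc_iff hM]

end PMaux
open Finset


namespace PMaux

lemma numArcs_eq {n : ℕ} {P : Finpartition (Finset.Icc 1 n)} (hM : IsMatching P) :
    numArcs P = (toArcs n P).card := by
  have : {a : ℕ × ℕ | IsArc P a} = ↑(toArcs n P) := by
    ext a
    simp only [Set.mem_setOf_eq, Finset.coe_sort_coe, Finset.mem_coe]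
    exact isArc_iff_mem hM
  rw [numArcs, this, Set.ncard_coe_finset]

lemma align_iff {n : ℕ} {P : Finpartition (Finset.Icc 1 n)} (hM : IsMatching P) :
    HasNbrAlign P ↔ ∃ p ∈ toArcs n P, ∃ q ∈ toArcs n P, p.2 + 1 = q.1 := by
  constructor
  · rintro ⟨a, b, ha, hb, hab⟩
    exact ⟨a, (isArc_iff_mem hM).1 ha, b, (isArc_iff_mem hM).1 hb, hab⟩
  · rintro ⟨a, ha, b, hb, hab⟩
    exact ⟨a, b, (isArc_iff_mem hM).2 ha, (isArc_iff_mem hM).2 hb, hab⟩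

lemma block_of_mem_toArcs {n : ℕ} {P : Finpartition (Finset.Icc 1 n)} {p : ℕ × ℕ}
    (hp : p ∈ toArcs n P) : p.1 < p.2 ∧ ({p.1, p.2} : Finset ℕ) ∈ P.parts :=
  mem_toArcs.1 hp

lemma toArcs_valid {n : ℕ} {P : Finpartition (Finset.Icc 1 n)} (hM : IsMatching P)
    (hA : ¬ HasNbrAlign P) : Valid n (toArcs n P) := by
  refine ⟨?_, ?_, ?_⟩
  · intro p hp
    obtain ⟨hlt, hB⟩ := mem_toArcs.1 hp
    have h1 := mem_Icc_of_mem_parts hB (x := p.1) (by simp)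
    have h2 := mem_Icc_of_mem_parts hB (x := p.2) (by simp)
    omega
  · intro p hp q hq hne
    obtain ⟨hplt, hpB⟩ := mem_toArcs.1 hp
    obtain ⟨hqlt, hqB⟩ := mem_toArcs.1 hq
    have key : ∀ x, x ∈ ({p.1, p.2} : Finset ℕ) → x ∈ ({q.1, q.2} : Finset ℕ) → False := by
      intro x hx hy
      have heq := P.eq_of_mem_parts hpB hqB hx hy
      obtain ⟨h1, h2⟩ := pair_eq hplt hqlt heq
      exact hne (Prod.ext h1 h2)
    refine ⟨?_, ?_, ?_, ?_⟩ <;> intro h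
    · exact key p.1 (by simp) (by rw [h]; simp)
    · exact key p.1 (by simp) (by rw [h]; simp)
    · exact key p.2 (by simp) (by rw [h]; simp)
    · exact key p.2 (by simp) (by rw [h]; simp)
  · intro p hp q hq h
    exact hA ((align_iff hM).2 ⟨p, hp, q, hq, h⟩)

end PMaux
open Finset
namespace PMaux

def partsOf (n : ℕ) (A : Finset (ℕ × ℕ)) : Finset (Finset ℕ) :=
  A.image (fun p => ({p.1, p.2} : Finset ℕ)) ∪
    ((Finset.Icc 1 n).filter (fun x => ∀ p ∈ A, x ≠ p.1 ∧ x ≠ p.2)).image (fun x => {x})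

lemma mem_partsOf {n : ℕ} {A : Finset (ℕ × ℕ)} {B : Finset ℕ} :
    B ∈ partsOf n A ↔ (∃ p ∈ A, B = {p.1, p.2}) ∨
      (∃ x, 1 ≤ x ∧ x ≤ n ∧ (∀ p ∈ A, x ≠ p.1 ∧ x ≠ p.2) ∧ B = {x}) := by
  unfold partsOf
  simp only [Finset.mem_union, Finset.mem_image, Finset.mem_filter, Finset.mem_Icc]
  constructor
  · rintro (⟨p, hp, rfl⟩ | ⟨x, ⟨⟨h1, h2⟩, h3⟩, rfl⟩)
    · exact Or.inl ⟨p, hp, rfl⟩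
    · exact Or.inr ⟨x, h1, h2, h3, rfl⟩
  · rintro (⟨p, hp, rfl⟩ | ⟨x, h1, h2, h3, rfl⟩)
    · exact Or.inl ⟨p, hp, rfl⟩
    · exact Or.inr ⟨x, ⟨⟨h1, h2⟩, h3⟩, rfl⟩

def ofArcs (n : ℕ) (A : Finset (ℕ × ℕ)) (hV : Valid n A) : Finpartition (Finset.Icc 1 n) where
  parts := partsOf n A
  supIndep := by
    rw [Finset.supIndep_iff_pairwiseDisjoint]
    intro B hB C hC hne
    rw [Finset.mem_coe, mem_partsOf] at hB hC
    show Disjoint B C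
    rw [Finset.disjoint_left]
    intro x hxB hxC
    rcases hB with ⟨p, hp, rfl⟩ | ⟨a, _, _, ha, rfl⟩ <;>
      rcases hC with ⟨q, hq, rfl⟩ | ⟨b, _, _, hb, rfl⟩
    · simp only [Finset.mem_insert, Finset.mem_singleton] at hxB hxC
      have hpq : p ≠ q := by
        rintro rfl; exact hne rfl
      have hd := hV.2.1 p hp q hq hpq
      rcases hxB with rfl | rfl <;> rcases hxC with h | h <;> omega
    · simp only [Finset.mem_singleton] at hxC
      subst hxC
      have := hb p hp
      simp only [Finset.mem_insert, Finset.mem_singleton] at hxB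
      rcases hxB with rfl | rfl <;> omega
    · simp only [Finset.mem_singleton] at hxB
      subst hxB
      have := ha q hq
      simp only [Finset.mem_insert, Finset.mem_singleton] at hxC
      rcases hxC with rfl | rfl <;> omega
    · simp only [Finset.mem_singleton] at hxB hxC
      subst hxB; subst hxC
      exact hne rfl
  sup_parts := by
    apply Finset.ext
    intro x
    rw [Finset.mem_sup]
    constructor
    · rintro ⟨B, hB, hxB⟩
      rw [mem_partsOf] at hB
      simp only [Finset.mem_Icc]
      rcases hB with ⟨p, hp, rfl⟩ | ⟨a, h1, h2, _, rfl⟩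
      · have := hV.1 p hp
        simp only [Function.id_def, Finset.mem_insert, Finset.mem_singleton] at hxB
        rcases hxB with rfl | rfl <;> omega
      · simp only [Function.id_def, Finset.mem_singleton] at hxB
        omega
    · intro hx
      simp only [Finset.mem_Icc] at hx
      by_cases hend : ∃ p ∈ A, x = p.1 ∨ x = p.2
      · obtain ⟨p, hp, hor⟩ := hend
        refine ⟨{p.1, p.2}, mem_partsOf.2 (Or.inl ⟨p, hp, rfl⟩), ?_⟩
        simp only [Function.id_def, Finset.mem_insert, Finset.mem_singleton]
        tauto
      · push_neg at hend
        refine ⟨{x}, mem_partsOf.2 (Or.inr ⟨x, hx.1, hx.2, ?_, rfl⟩), by simp⟩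
        intro p hp
        exact hend p hp
  bot_notMem := by
    rw [Finset.bot_eq_empty, mem_partsOf]
    rintro (⟨p, _, h⟩ | ⟨x, _, _, _, h⟩)
    · exact absurd h.symm (by simp)
    · exact absurd h.symm (by simp)

lemma ofArcs_parts {n : ℕ} {A : Finset (ℕ × ℕ)} (hV : Valid n A) :
    (ofArcs n A hV).parts = partsOf n A := rfl

end PMaux
open Finset
namespace PMaux

lemma pair_mem_ofArcs {n : ℕ} {A : Finset (ℕ × ℕ)} (hV : Valid n A) {q : ℕ × ℕ}
    (hq : q.1 < q.2) : ({q.1, q.2} : Finset ℕ) ∈ partsOf n A ↔ q ∈ A := by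
  rw [mem_partsOf]
  constructor
  · rintro (⟨p, hp, he⟩ | ⟨x, _, _, _, he⟩)
    · have hb := hV.1 p hp
      obtain ⟨h1, h2⟩ := pair_eq hq hb.2.1 he
      have : q = p := Prod.ext h1 h2
      rwa [this]
    · exfalso
      have h1 : q.1 ∈ ({x} : Finset ℕ) := by rw [← he]; simp
      have h2 : q.2 ∈ ({x} : Finset ℕ) := by rw [← he]; simp
      simp only [Finset.mem_singleton] at h1 h2
      omega
  · intro hq'
    exact Or.inl ⟨q, hq', rfl⟩

lemma toArcs_ofArcs {n : ℕ} {A : Finset (ℕ × ℕ)} (hV : Valid n A) :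
    toArcs n (ofArcs n A hV) = A := by
  apply Finset.ext
  intro q
  rw [mem_toArcs, ofArcs_parts]
  constructor
  · rintro ⟨hlt, hB⟩
    exact (pair_mem_ofArcs hV hlt).1 hB
  · intro hq
    have hb := hV.1 q hq
    exact ⟨hb.2.1, (pair_mem_ofArcs hV hb.2.1).2 hq⟩

lemma ofArcs_matching {n : ℕ} {A : Finset (ℕ × ℕ)} (hV : Valid n A) :
    IsMatching (ofArcs n A hV) := by
  intro B hB
  rw [ofArcs_parts, mem_partsOf] at hB
  rcases hB with ⟨p, hp, rfl⟩ | ⟨x, _, _, _, rfl⟩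
  · exact (Finset.card_insert_le _ _).trans (by simp)
  · simp

lemma ofArcs_noAlign {n : ℕ} {A : Finset (ℕ × ℕ)} (hV : Valid n A) :
    ¬ HasNbrAlign (ofArcs n A hV) := by
  rw [align_iff (ofArcs_matching hV), toArcs_ofArcs hV]
  rintro ⟨p, hp, q, hq, h⟩
  exact hV.2.2 p hp q hq h

lemma ofArcs_numArcs {n : ℕ} {A : Finset (ℕ × ℕ)} (hV : Valid n A) :
    numArcs (ofArcs n A hV) = A.card := by
  rw [numArcs_eq (ofArcs_matching hV), toArcs_ofArcs hV]

lemma parts_eq_partsOf {n : ℕ} {P : Finpartition (Finset.Icc 1 n)} (hM : IsMatching P) :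
    P.parts = partsOf n (toArcs n P) := by
  apply Finset.ext
  intro B
  rw [mem_partsOf]
  constructor
  · intro hB
    have hnon := P.nonempty_of_mem_parts hB
    have hcard := hM B hB
    interval_cases h : B.card
    · exact absurd (Finset.card_eq_zero.1 h) (Finset.nonempty_iff_ne_empty.1 hnon)
    · obtain ⟨x, rfl⟩ := Finset.card_eq_one.1 h
      refine Or.inr ⟨x, ?_, ?_, ?_, rfl⟩
      · exact (mem_Icc_of_mem_parts hB (by simp)).1
      · exact (mem_Icc_of_mem_parts hB (by simp)).2
      · intro p hp
        obtain ⟨hlt, hpB⟩ := mem_toArcs.1 hp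
        constructor <;> rintro rfl
        · have heq := P.eq_of_mem_parts hB hpB (Finset.mem_singleton_self p.1)
            (Finset.mem_insert_self _ _)
          have : p.2 ∈ ({p.1} : Finset ℕ) := heq ▸ (by simp)
          simp only [Finset.mem_singleton] at this
          omega
        · have heq := P.eq_of_mem_parts hB hpB (Finset.mem_singleton_self p.2)
            (by simp : p.2 ∈ ({p.1, p.2} : Finset ℕ))
          have : p.1 ∈ ({p.2} : Finset ℕ) := heq ▸ (Finset.mem_insert_self _ _)
          simp only [Finset.mem_singleton] at this
          omega
    · obtain ⟨a, b, hab, rfl⟩ := Finset.card_eq_two.1 h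
      rcases Nat.lt_or_ge a b with hlt | hge
      · refine Or.inl ⟨(a, b), mem_toArcs.2 ⟨hlt, hB⟩, rfl⟩
      · have hlt : b < a := by omega
        have hswap : ({a, b} : Finset ℕ) = {b, a} := by
          apply Finset.ext; intro x; simp; tauto
        rw [hswap] at hB ⊢
        exact Or.inl ⟨(b, a), mem_toArcs.2 ⟨hlt, hB⟩, rfl⟩
  · rintro (⟨p, hp, rfl⟩ | ⟨x, h1, h2, h3, rfl⟩)
    · exact (mem_toArcs.1 hp).2
    · -- x is in some part; that part must be {x}
      obtain ⟨B, hB, hxB⟩ := P.exists_mem (a := x) (by simp; omega)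
      have hcard := hM B hB
      have hnon := P.nonempty_of_mem_parts hB
      interval_cases h : B.card
      · exact absurd (Finset.card_eq_zero.1 h) (Finset.nonempty_iff_ne_empty.1 hnon)
      · obtain ⟨y, rfl⟩ := Finset.card_eq_one.1 h
        simp only [Finset.mem_singleton] at hxB
        subst hxB
        exact hB
      · exfalso
        obtain ⟨a, b, hab, rfl⟩ := Finset.card_eq_two.1 h
        -- x = a or x = b, and (min,max) is an arc containing x as endpoint
        have harc : ∃ p ∈ toArcs n P, x = p.1 ∨ x = p.2 := by
          rcases Nat.lt_or_ge a b with hlt | hge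
          · refine ⟨(a, b), mem_toArcs.2 ⟨hlt, hB⟩, ?_⟩
            simp only [Finset.mem_insert, Finset.mem_singleton] at hxB
            tauto
          · have hlt : b < a := by omega
            have hswap : ({a, b} : Finset ℕ) = {b, a} := by
              apply Finset.ext; intro y; simp; tauto
            rw [hswap] at hB
            refine ⟨(b, a), mem_toArcs.2 ⟨hlt, hB⟩, ?_⟩
            simp only [Finset.mem_insert, Finset.mem_singleton] at hxB
            tauto
        obtain ⟨p, hp, hor⟩ := harc
        have := h3 p hp
        tauto

end PMaux
open Finset
namespace PMaux

lemma arcsets_shrink {n k : ℕ} (hn : 1 ≤ n) :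
    (ArcSets n k).filter (fun A => ∀ p ∈ A, p.2 ≠ n) = ArcSets (n - 1) k := by
  apply Finset.ext
  intro A
  simp only [Finset.mem_filter, mem_ArcSets]
  constructor
  · rintro ⟨⟨⟨hB, hD, hN⟩, hc⟩, hnon⟩
    refine ⟨⟨?_, hD, hN⟩, hc⟩
    intro p hp
    have := hB p hp
    have := hnon p hp
    omega
  · rintro ⟨⟨hB, hD, hN⟩, hc⟩
    refine ⟨⟨⟨?_, hD, hN⟩, hc⟩, ?_⟩
    · intro p hp; have := hB p hp; omega
    · intro p hp; have := hB p hp; omega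

theorem arcsets_rec (n k : ℕ) (hn : 3 ≤ n) (hk : 1 ≤ k) (hkn : k ≤ n / 2) :
    (ArcSets n k).card = (ArcSets (n - 1) k).card + (n - k) * (ArcSets (n - 2) (k - 1)).card := by
  have hsplit := Finset.card_filter_add_card_filter_not
    (s := ArcSets n k) (p := fun A => ∀ p ∈ A, p.2 ≠ n)
  rw [arcsets_shrink (by omega)] at hsplit
  -- the matched part
  have hmatched :
      ((ArcSets n k).filter (fun A => ¬ ∀ p ∈ A, p.2 ≠ n)).card
        = ((ArcSets (n - 2) (k - 1)).sigma
            (fun M => (Finset.Icc 1 (n - 1)).filter (fun i => ∀ p ∈ M, p.2 + 1 ≠ i))).card := by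
    apply Finset.card_bij' (i := fun A _ => (⟨del n A, pt A n⟩ : Σ _ : Finset (ℕ × ℕ), ℕ))
      (j := fun x _ => ins n x.2 x.1)
    · -- del maps into sigma
      intro A hA
      rw [Finset.mem_filter, mem_ArcSets] at hA
      obtain ⟨⟨hV, hc⟩, hex⟩ := hA
      push_neg at hex
      obtain ⟨p, hp, hp2⟩ := hex
      have hiA : (p.1, n) ∈ A := by rwa [← hp2, Prod.mk.eta]
      have hpt : pt A n = p.1 := pt_eq hV hiA
      obtain ⟨h1, h2, h3, h4, h5⟩ := del_valid hn hk hV hc hiA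
      rw [Finset.mem_sigma, mem_ArcSets, Finset.mem_filter, Finset.mem_Icc, hpt]
      exact ⟨⟨h1, h2⟩, ⟨h3, h4⟩, h5⟩
    · rintro ⟨M, i⟩ hx
      rw [Finset.mem_sigma, mem_ArcSets, Finset.mem_filter, Finset.mem_Icc] at hx
      obtain ⟨⟨hV, hc⟩, ⟨hi1, hi2⟩, hfree⟩ := hx
      obtain ⟨hIV, hIc⟩ := ins_valid hn hk hV hc hi1 hi2 hfree
      rw [Finset.mem_filter, mem_ArcSets]
      refine ⟨⟨hIV, hIc⟩, ?_⟩
      push_neg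
      exact ⟨(i, n), Finset.mem_insert_self _ _, rfl⟩
    · intro A hA
      rw [Finset.mem_filter, mem_ArcSets] at hA
      obtain ⟨⟨hV, hc⟩, hex⟩ := hA
      push_neg at hex
      obtain ⟨p, hp, hp2⟩ := hex
      have hiA : (p.1, n) ∈ A := by rwa [← hp2, Prod.mk.eta]
      have hpt : pt A n = p.1 := pt_eq hV hiA
      rw [hpt]
      exact ins_del hn hk hV hc hiA
    · rintro ⟨M, i⟩ hx
      rw [Finset.mem_sigma, mem_ArcSets, Finset.mem_filter, Finset.mem_Icc] at hx
      obtain ⟨⟨hV, hc⟩, ⟨hi1, hi2⟩, hfree⟩ := hx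
      obtain ⟨h1, h2⟩ := del_ins hn hk hV hc hi1 hi2 hfree
      simp only [h1, h2]
  rw [Finset.card_sigma] at hmatched
  have hconst : ∀ M ∈ ArcSets (n - 2) (k - 1),
      ((Finset.Icc 1 (n - 1)).filter (fun i => ∀ p ∈ M, p.2 + 1 ≠ i)).card = n - k := by
    intro M hM
    rw [mem_ArcSets] at hM
    obtain ⟨⟨hB, hD, hN⟩, hc⟩ := hM
    have himg : (Finset.Icc 1 (n - 1)).filter (fun i => ¬ ∀ p ∈ M, p.2 + 1 ≠ i)
        = M.image (fun p => p.2 + 1) := by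
      apply Finset.ext
      intro i
      simp only [Finset.mem_filter, Finset.mem_image, Finset.mem_Icc, not_forall]
      constructor
      · rintro ⟨_, p, hp, h⟩
        exact ⟨p, hp, by omega⟩
      · rintro ⟨p, hp, rfl⟩
        have := hB p hp
        exact ⟨by omega, p, hp, by omega⟩
    have hsplit2 := Finset.card_filter_add_card_filter_not
      (s := Finset.Icc 1 (n - 1)) (p := fun i => ∀ p ∈ M, p.2 + 1 ≠ i)
    rw [himg] at hsplit2
    have hinj : (M.image (fun p => p.2 + 1)).card = k - 1 := by
      rw [Finset.card_image_of_injOn, hc]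
      intro p hp q hq h
      simp only at h
      by_contra hne
      exact (hD p hp q hq hne).2.2.2 (by omega)
    rw [hinj] at hsplit2
    rw [Nat.card_Icc] at hsplit2
    omega
  rw [Finset.sum_congr rfl hconst, Finset.sum_const, smul_eq_mul, Nat.mul_comm] at hmatched
  omega

end PMaux



namespace PMaux

lemma pnum_eq (n k : ℕ) : Pnum n k = (ArcSets n k).card := by
  classical
  set S := {P : Finpartition (Finset.Icc 1 n) |
    IsMatching P ∧ numArcs P = k ∧ ¬ HasNbrAlign P} with hS
  have himg : toArcs n '' S = ↑(ArcSets n k) := by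
    ext A
    simp only [Set.mem_image, Finset.coe_sort_coe, Finset.mem_coe, mem_ArcSets]
    constructor
    · rintro ⟨P, ⟨hM, hk, hA⟩, rfl⟩
      exact ⟨toArcs_valid hM hA, by rw [← numArcs_eq hM]; exact hk⟩
    · rintro ⟨hV, hc⟩
      exact ⟨ofArcs n A hV, ⟨ofArcs_matching hV, by rw [ofArcs_numArcs hV]; exact hc,
        ofArcs_noAlign hV⟩, toArcs_ofArcs hV⟩
  have hinj : Set.InjOn (toArcs n) S := by
    intro P hP Q hQ h
    have hPp := parts_eq_partsOf hP.1
    have hQp := parts_eq_partsOf hQ.1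
    apply Finpartition.ext
    rw [hPp, hQp, h]
  calc Pnum n k = S.ncard := rfl
    _ = (toArcs n '' S).ncard := (Set.ncard_image_of_injOn hinj).symm
    _ = (↑(ArcSets n k) : Set (Finset (ℕ × ℕ))).ncard := by rw [himg]
    _ = (ArcSets n k).card := Set.ncard_coe_finset _

theorem main :
    (∀ n k : ℕ, 3 ≤ n → 1 ≤ k → k ≤ n / 2 →
        Pnum n k = Pnum (n - 1) k + (n - k) * Pnum (n - 2) (k - 1)) ∧
      Pnum 1 0 = 1 ∧ Pnum 2 0 = 1 ∧ Pnum 2 1 = 1 := by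
  refine ⟨?_, ?_, ?_, ?_⟩
  · intro n k hn hk hkn
    rw [pnum_eq, pnum_eq, pnum_eq]
    exact arcsets_rec n k hn hk hkn
  · rw [pnum_eq]; decide
  · rw [pnum_eq]; decide
  · rw [pnum_eq]; decide

end PMaux


/-- Recurrence for the number of partial matchings of `[n]` with `k` arcs and no
neighbor alignments, together with the initial values. -/
theorem stmt_0 :
    (∀ n k : ℕ, 3 ≤ n → 1 ≤ k → k ≤ n / 2 →
        Pnum n k = Pnum (n - 1) k + (n - k) * Pnum (n - 2) (k - 1)) ∧
      Pnum 1 0 = 1 ∧ Pnum 2 0 = 1 ∧ Pnum 2 1 = 1 := PMaux.main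
end

section
/- For all integers n ≥ 1 and 0 ≤ k ≤ ⌊n/2⌋, the number P(n,k) equals the elementary symmetric polynomial e_k(1, 2, ..., n-k), i.e. P(n,k) = Σ over all k-element subsets S of {1,...,n-k} of the product of the elements of S. -/
open Finset

def insF (i x : ℕ) : ℕ := if x < i then x else x + 1
def delF (i x : ℕ) : ℕ := if x < i then x else x - 1

lemma insF_inj (i : ℕ) : Function.Injective (insF i) := by
  intro x y h
  simp only [insF] at h
  split_ifs at h <;> omega

lemma insF_pair_inj (i : ℕ) : Function.Injective (fun p : ℕ × ℕ => (insF i p.1, insF i p.2)) := by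
  intro p q h
  simp only [Prod.mk.injEq] at h
  exact Prod.ext (insF_inj i h.1) (insF_inj i h.2)


def ArcCond (n : ℕ) (M : Finset (ℕ × ℕ)) : Prop :=
  (∀ p ∈ M, 1 ≤ p.1 ∧ p.1 < p.2 ∧ p.2 ≤ n) ∧
  (∀ p ∈ M, ∀ q ∈ M, p ≠ q → p.1 ≠ q.1 ∧ p.1 ≠ q.2 ∧ p.2 ≠ q.1 ∧ p.2 ≠ q.2) ∧
  (∀ p ∈ M, ∀ q ∈ M, p.2 + 1 ≠ q.1)

open Classical in
noncomputable def ASet (n k : ℕ) : Finset (Finset (ℕ × ℕ)) :=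
  ((Finset.Icc 1 n ×ˢ Finset.Icc 1 n).powerset).filter (fun M => ArcCond n M ∧ M.card = k)

lemma mem_ASet {n k : ℕ} {M : Finset (ℕ × ℕ)} :
    M ∈ ASet n k ↔ ArcCond n M ∧ M.card = k := by
  classical
  constructor
  · intro h
    have := (Finset.mem_filter.mp h).2
    convert this
  · intro h
    rw [ASet, Finset.mem_filter]
    refine ⟨Finset.mem_powerset.mpr ?_, by convert h⟩
    intro p hp
    have h1 := h.1.1 p hp
    simp only [Finset.mem_product, Finset.mem_Icc]
    omega

lemma ASet_zero (n : ℕ) : ASet n 0 = {∅} := by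
  ext M
  rw [mem_ASet, Finset.mem_singleton, Finset.card_eq_zero]
  constructor
  · exact fun h => h.2
  · rintro rfl
    refine ⟨⟨?_, ?_, ?_⟩, rfl⟩ <;> simp

lemma ASet_small (n k : ℕ) (hk : 1 ≤ k) (hn : n ≤ 1) : ASet n k = ∅ := by
  ext M
  simp only [Finset.notMem_empty, iff_false, mem_ASet, not_and]
  intro hA hcard
  have : M.Nonempty := Finset.card_pos.mp (by omega)
  obtain ⟨p, hp⟩ := this
  have := hA.1 p hp
  omega

open Classical in
lemma ASet_filter_notTop (n k : ℕ) (hn : 1 ≤ n) :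
    (ASet n k).filter (fun M => ∀ p ∈ M, p.2 ≠ n) = ASet (n-1) k := by
  ext M
  simp only [Finset.mem_filter, mem_ASet]
  constructor
  · rintro ⟨⟨⟨hb, hd, ha⟩, hc⟩, hne⟩
    refine ⟨⟨?_, hd, ha⟩, hc⟩
    intro p hp
    have := hb p hp
    have := hne p hp
    omega
  · rintro ⟨⟨hb, hd, ha⟩, hc⟩
    refine ⟨⟨⟨?_, hd, ha⟩, hc⟩, ?_⟩
    · intro p hp; have := hb p hp; omega
    · intro p hp; have := hb p hp; omega


def upF (i : ℕ) (n : ℕ) (M' : Finset (ℕ × ℕ)) : Finset (ℕ × ℕ) :=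
  insert (i, n) (M'.image (fun p => (insF i p.1, insF i p.2)))

open Classical in
lemma ASet_filter_top_card (n k : ℕ) (hn : 2 ≤ n) :
    ((ASet n (k+1)).filter (fun M => ¬ ∀ p ∈ M, p.2 ≠ n)).card
      = (n - (k+1)) * (ASet (n-2) k).card := by
  classical
  have hcard2 : ∀ M' ∈ ASet (n-2) k,
      (Finset.Icc 1 (n-1) \ M'.image (fun p => p.2 + 1)).card = n - (k+1) := by
    intro M' hM'
    obtain ⟨⟨hb, hd, ha⟩, hc⟩ := mem_ASet.mp hM'
    have hsub : M'.image (fun p => p.2 + 1) ⊆ Finset.Icc 1 (n-1) := by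
      intro x hx
      obtain ⟨p, hp, rfl⟩ := Finset.mem_image.mp hx
      have := hb p hp
      simp only [Finset.mem_Icc]
      omega
    rw [Finset.card_sdiff_of_subset hsub, Finset.card_image_of_injOn, hc]
    · simp only [Nat.card_Icc]
      omega
    · intro p hp q hq h
      simp only at h
      by_contra hne
      exact (hd p hp q hq hne).2.2.2 (by omega)
  rw [show (n - (k+1)) * (ASet (n-2) k).card
      = ((ASet (n-2) k).sigma
          (fun M' => Finset.Icc 1 (n-1) \ M'.image (fun p => p.2 + 1))).card by
    rw [Finset.card_sigma]
    rw [Finset.sum_congr rfl hcard2]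
    rw [Finset.sum_const, smul_eq_mul, mul_comm]]
  refine (Finset.card_bij (fun (a : (_ : Finset (ℕ × ℕ)) × ℕ) _ => upF a.2 n a.1)
    ?_ ?_ ?_).symm
  · -- maps into target
    rintro ⟨M', i⟩ ha
    simp only [Finset.mem_sigma] at ha
    obtain ⟨hM', hi⟩ := ha
    obtain ⟨⟨hb, hd, hal⟩, hc⟩ := mem_ASet.mp hM'
    rw [Finset.mem_sdiff, Finset.mem_Icc] at hi
    obtain ⟨⟨hi1, hi2⟩, hni⟩ := hi
    have hni' : ∀ p ∈ M', p.2 + 1 ≠ i := by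
      intro p hp h
      exact hni (Finset.mem_image.mpr ⟨p, hp, h⟩)
    have hfresh : (i, n) ∉ M'.image (fun p => (insF i p.1, insF i p.2)) := by
      intro h
      obtain ⟨p, hp, hpe⟩ := Finset.mem_image.mp h
      have := hb p hp
      simp only [Prod.mk.injEq, insF] at hpe
      split_ifs at hpe <;> omega
    rw [Finset.mem_filter]
    refine ⟨mem_ASet.mpr ⟨⟨?_, ?_, ?_⟩, ?_⟩, ?_⟩
    · -- bounds
      intro p hp
      simp only [upF, Finset.mem_insert] at hp
      rcases hp with rfl | hp
      · exact ⟨hi1, by omega, le_refl n⟩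
      · obtain ⟨q, hq, rfl⟩ := Finset.mem_image.mp hp
        have := hb q hq
        simp only [insF]
        split_ifs <;> omega
    · -- distinct endpoints
      intro p hp q hq hne
      simp only [upF, Finset.mem_insert] at hp hq
      rcases hp with rfl | hp <;> rcases hq with rfl | hq
      · exact absurd rfl hne
      · obtain ⟨r, hr, rfl⟩ := Finset.mem_image.mp hq
        have := hb r hr
        simp only [insF]
        split_ifs <;> constructor <;> try constructor
        all_goals omega
      · obtain ⟨r, hr, rfl⟩ := Finset.mem_image.mp hp
        have := hb r hr
        simp only [insF]
        split_ifs <;> constructor <;> try constructor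
        all_goals omega
      · obtain ⟨r, hr, rfl⟩ := Finset.mem_image.mp hp
        obtain ⟨s, hs, rfl⟩ := Finset.mem_image.mp hq
        have hrs : r ≠ s := by rintro rfl; exact hne rfl
        have h4 := hd r hr s hs hrs
        have := hb r hr
        have := hb s hs
        simp only [insF]
        split_ifs <;> constructor <;> try constructor
        all_goals omega
    · -- no alignment
      intro p hp q hq
      simp only [upF, Finset.mem_insert] at hp hq
      rcases hp with rfl | hp <;> rcases hq with rfl | hq
      · simp only []; omega
      · obtain ⟨r, hr, rfl⟩ := Finset.mem_image.mp hq
        have := hb r hr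
        simp only [insF]
        split_ifs <;> omega
      · obtain ⟨r, hr, rfl⟩ := Finset.mem_image.mp hp
        have := hb r hr
        have := hni' r hr
        simp only [insF]
        split_ifs <;> omega
      · obtain ⟨r, hr, rfl⟩ := Finset.mem_image.mp hp
        obtain ⟨s, hs, rfl⟩ := Finset.mem_image.mp hq
        have hal1 := hal r hr s hs
        have := hb r hr
        have := hb s hs
        by_cases hrs : r = s
        · subst hrs
          simp only [insF]
          split_ifs <;> omega
        · have h4 := hd r hr s hs hrs
          simp only [insF]
          split_ifs <;> omega
    · -- card
      simp only [upF]
      rw [Finset.card_insert_of_notMem hfresh,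
        Finset.card_image_of_injective _ (insF_pair_inj i), hc]
    · -- contains an arc ending at n
      intro h
      exact h (i, n) (Finset.mem_insert_self _ _) rfl
  · -- injectivity
    rintro ⟨M', i⟩ ha ⟨M'', i'⟩ ha' heq
    rw [Finset.mem_sigma] at ha ha'
    obtain ⟨⟨hb, _, _⟩, _⟩ := mem_ASet.mp ha.1
    obtain ⟨⟨hb', _, _⟩, _⟩ := mem_ASet.mp ha'.1
    simp only at heq
    have hii : i = i' := by
      have hmem : ((i:ℕ), n) ∈ upF i' n M'' := by
        rw [← heq, upF]; exact Finset.mem_insert_self _ _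
      simp only [upF, Finset.mem_insert] at hmem
      rcases hmem with h | h
      · exact (Prod.mk.injEq .. ▸ h).1
      · obtain ⟨p, hp, hpe⟩ := Finset.mem_image.mp h
        have := hb' p hp
        simp only [Prod.mk.injEq, insF] at hpe
        split_ifs at hpe <;> omega
    subst hii
    have hfresh : ∀ (N : Finset (ℕ × ℕ)), (∀ p ∈ N, 1 ≤ p.1 ∧ p.1 < p.2 ∧ p.2 ≤ n - 2) →
        (i, n) ∉ N.image (fun p => (insF i p.1, insF i p.2)) := by
      intro N hN h
      obtain ⟨p, hp, hpe⟩ := Finset.mem_image.mp h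
      have := hN p hp
      simp only [Prod.mk.injEq, insF] at hpe
      split_ifs at hpe <;> omega
    have himg : M'.image (fun p => (insF i p.1, insF i p.2))
        = M''.image (fun p => (insF i p.1, insF i p.2)) := by
      have h1 := hfresh M' hb
      have h2 := hfresh M'' hb'
      have := congrArg (fun s => Finset.erase s (i, n)) heq
      simpa [upF, Finset.erase_insert h1, Finset.erase_insert h2] using this
    have : M' = M'' := Finset.image_injective (insF_pair_inj i) himg
    subst this
    rfl
  · -- surjectivity
    rintro M hM
    rw [Finset.mem_filter] at hM
    obtain ⟨hMA, hMn⟩ := hM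
    obtain ⟨⟨hb, hd, hal⟩, hc⟩ := mem_ASet.mp hMA
    push_neg at hMn
    obtain ⟨p, hp, hp2⟩ := hMn
    have hpeq : p = (p.1, n) := by rw [← hp2]
    set i := p.1 with hidef
    have hpm : (i, n) ∈ M := hpeq ▸ hp
    have hpb := hb p hp
    have hi1 : 1 ≤ i := hpb.1
    have hi2 : i ≤ n - 1 := by omega
    set E := M.erase (i, n) with hE
    have hEkey : ∀ q ∈ E, 1 ≤ q.1 ∧ q.1 < q.2 ∧ q.2 ≤ n - 1 ∧ q.1 ≠ i ∧ q.2 ≠ i ∧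
        q.2 + 1 ≠ i ∧ q ∈ M := by
      intro q hq
      rw [hE, Finset.mem_erase] at hq
      obtain ⟨hqne, hqM⟩ := hq
      have hqb := hb q hqM
      have h4 := hd q hqM (i, n) hpm hqne
      have h5 := hal q hqM (i, n) hpm
      simp only at h4 h5
      refine ⟨hqb.1, hqb.2.1, ?_, h4.1, h4.2.2.1, h5, hqM⟩
      have : q.2 ≠ n := h4.2.2.2
      omega
    set M' := E.image (fun q => (delF i q.1, delF i q.2)) with hM'def
    have hM'A : M' ∈ ASet (n-2) k := by
      refine mem_ASet.mpr ⟨⟨?_, ?_, ?_⟩, ?_⟩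
      · intro r hr
        obtain ⟨q, hq, rfl⟩ := Finset.mem_image.mp hr
        have := hEkey q hq
        simp only [delF]
        split_ifs <;> omega
      · intro r hr s hs hne
        obtain ⟨q, hq, rfl⟩ := Finset.mem_image.mp hr
        obtain ⟨u, hu, rfl⟩ := Finset.mem_image.mp hs
        have hqu : q ≠ u := by rintro rfl; exact hne rfl
        have h4 := hd q (hEkey q hq).2.2.2.2.2.2 u (hEkey u hu).2.2.2.2.2.2 hqu
        have := hEkey q hq
        have := hEkey u hu
        simp only [delF]
        split_ifs <;> constructor <;> try constructor
        all_goals omega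
      · intro r hr s hs
        obtain ⟨q, hq, rfl⟩ := Finset.mem_image.mp hr
        obtain ⟨u, hu, rfl⟩ := Finset.mem_image.mp hs
        have hq' := hEkey q hq
        have hu' := hEkey u hu
        have hal1 := hal q hq'.2.2.2.2.2.2 u hu'.2.2.2.2.2.2
        by_cases hqu : q = u
        · subst hqu
          simp only [delF]
          split_ifs <;> omega
        · have h4 := hd q hq'.2.2.2.2.2.2 u hu'.2.2.2.2.2.2 hqu
          simp only [delF]
          split_ifs <;> omega
      · have hcE : E.card = k := by
          rw [hE, Finset.card_erase_of_mem hpm, hc]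
          omega
        rw [hM'def, Finset.card_image_of_injOn, hcE]
        intro q hq u hu h
        have hq' := hEkey q hq
        have hu' := hEkey u hu
        simp only [Prod.mk.injEq, delF] at h
        have : q.1 = u.1 ∧ q.2 = u.2 := by
          constructor
          · have := h.1; split_ifs at this <;> omega
          · have := h.2; split_ifs at this <;> omega
        exact Prod.ext this.1 this.2
    have hiv : i ∈ Finset.Icc 1 (n-1) \ M'.image (fun p => p.2 + 1) := by
      rw [Finset.mem_sdiff, Finset.mem_Icc]
      refine ⟨⟨hi1, hi2⟩, ?_⟩
      intro h
      obtain ⟨r, hr, hre⟩ := Finset.mem_image.mp h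
      obtain ⟨q, hq, rfl⟩ := Finset.mem_image.mp hr
      have := hEkey q hq
      simp only [delF] at hre
      split_ifs at hre <;> omega
    refine ⟨⟨M', i⟩, Finset.mem_sigma.mpr ⟨hM'A, hiv⟩, ?_⟩
    show upF i n M' = M
    rw [upF, hM'def, Finset.image_image]
    have himid : E.image ((fun p : ℕ × ℕ => (insF i p.1, insF i p.2)) ∘
        (fun q : ℕ × ℕ => (delF i q.1, delF i q.2))) = E := by
      rw [Finset.image_congr (g := id), Finset.image_id]
      intro q hq
      have := hEkey q hq
      simp only [Function.comp, insF, delF, id]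
      split_ifs <;> (ext <;> simp <;> omega)
    rw [himid, hE, Finset.insert_erase hpm]


noncomputable def Esum (n k : ℕ) : ℕ := ∑ S ∈ (Finset.Icc 1 (n - k)).powersetCard k, ∏ x ∈ S, x

lemma Esum_zero (n : ℕ) : Esum n 0 = 1 := by
  simp [Esum]

lemma Esum_small (n k : ℕ) (hk : 1 ≤ k) (hn : n ≤ 1) : Esum n k = 0 := by
  have h : n - k = 0 := by omega
  rw [Esum, h]
  have : (Finset.Icc 1 0) = (∅ : Finset ℕ) := by simp
  rw [this]
  rw [Finset.powersetCard_eq_empty.mpr (by simp; omega)]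
  simp

lemma esymm_step (m k : ℕ) (hm : 1 ≤ m) :
    ∑ S ∈ (Finset.Icc 1 m).powersetCard (k+1), ∏ x ∈ S, x
      = (∑ S ∈ (Finset.Icc 1 (m-1)).powersetCard (k+1), ∏ x ∈ S, x)
        + m * ∑ S ∈ (Finset.Icc 1 (m-1)).powersetCard k, ∏ x ∈ S, x := by
  have hmem : m ∉ Finset.Icc 1 (m-1) := by simp; omega
  have hins : Finset.Icc 1 m = insert m (Finset.Icc 1 (m-1)) := by
    ext x; simp [Finset.mem_Icc, Finset.mem_insert]; omega
  rw [hins, Finset.powersetCard_succ_insert hmem, Finset.sum_union]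
  · congr 1
    rw [Finset.sum_image]
    · rw [Finset.mul_sum]
      apply Finset.sum_congr rfl
      intro S hS
      rw [Finset.prod_insert]
      intro hmS
      exact hmem (Finset.mem_powersetCard.mp hS |>.1 hmS)
    · intro S hS T hT h
      have hmS : m ∉ S := fun h' => hmem (Finset.mem_powersetCard.mp hS |>.1 h')
      have hmT : m ∉ T := fun h' => hmem (Finset.mem_powersetCard.mp hT |>.1 h')
      have := congrArg (fun s => Finset.erase s m) h
      simpa [Finset.erase_insert hmS, Finset.erase_insert hmT] using this
  · rw [Finset.disjoint_left]
    intro S hS hS'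
    obtain ⟨T, hT, rfl⟩ := Finset.mem_image.mp hS'
    have : m ∈ insert m T := Finset.mem_insert_self _ _
    exact hmem (Finset.mem_powersetCard.mp hS |>.1 this)

lemma Esum_rec (n k : ℕ) (hn : 2 ≤ n) :
    Esum n (k+1) = Esum (n-1) (k+1) + (n - (k+1)) * Esum (n-2) k := by
  rcases le_or_gt n (k+1) with h | h
  · have h1 : n - (k+1) = 0 := by omega
    have h2 : Esum n (k+1) = 0 := by
      rw [Esum, h1]
      have : (Finset.Icc 1 0) = (∅ : Finset ℕ) := by simp
      rw [this, Finset.powersetCard_eq_empty.mpr (by simp)]; simp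
    have h3 : Esum (n-1) (k+1) = 0 := by
      rw [Esum]
      have : n - 1 - (k+1) = 0 := by omega
      rw [this]
      have : (Finset.Icc 1 0) = (∅ : Finset ℕ) := by simp
      rw [this, Finset.powersetCard_eq_empty.mpr (by simp)]; simp
    rw [h2, h3, h1]; simp
  · have hm : 1 ≤ n - (k+1) := by omega
    have e1 : n - 1 - (k+1) = n - (k+1) - 1 := by omega
    have e2 : n - 2 - k = n - (k+1) - 1 := by omega
    rw [Esum, Esum, Esum, e1, e2]
    exact esymm_step (n - (k+1)) k hm


open Classical in
noncomputable def toArcs {n : ℕ} (P : Finpartition (Finset.Icc 1 n)) : Finset (ℕ × ℕ) :=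
  ((Finset.Icc 1 n) ×ˢ (Finset.Icc 1 n)).filter (fun a => IsArc P a)

lemma mem_toArcs {n : ℕ} {P : Finpartition (Finset.Icc 1 n)} {a : ℕ × ℕ} :
    a ∈ toArcs P ↔ IsArc P a := by
  classical
  rw [toArcs]
  constructor
  · intro h
    have := Finset.mem_filter.mp h
    convert this.2
  · intro h
    obtain ⟨hlt, B, hB, h1, h2, h3⟩ := id h
    have hBle : B ⊆ Finset.Icc 1 n := P.le hB
    exact Finset.mem_filter.mpr ⟨Finset.mem_product.mpr ⟨hBle h1, hBle h2⟩, h⟩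

lemma arcs_set_eq {n : ℕ} (P : Finpartition (Finset.Icc 1 n)) :
    {a : ℕ × ℕ | IsArc P a} = ↑(toArcs P) := by
  ext a
  simp [mem_toArcs]

lemma numArcs_eq {n : ℕ} (P : Finpartition (Finset.Icc 1 n)) :
    numArcs P = (toArcs P).card := by
  rw [numArcs, arcs_set_eq, Set.ncard_coe_finset]

lemma isArc_iff_of_matching {n : ℕ} {P : Finpartition (Finset.Icc 1 n)}
    (hM : IsMatching P) {a : ℕ × ℕ} :
    IsArc P a ↔ a.1 < a.2 ∧ ({a.1, a.2} : Finset ℕ) ∈ P.parts := by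
  constructor
  · rintro ⟨hlt, B, hB, h1, h2, _⟩
    refine ⟨hlt, ?_⟩
    have hsub : ({a.1, a.2} : Finset ℕ) ⊆ B := by
      intro x hx
      rcases Finset.mem_insert.mp hx with rfl | hx
      · exact h1
      · rw [Finset.mem_singleton.mp hx]; exact h2
    have hcard : ({a.1, a.2} : Finset ℕ).card = 2 := by
      rw [Finset.card_insert_of_notMem (by simp; omega), Finset.card_singleton]
    have : B = {a.1, a.2} :=
      (Finset.eq_of_subset_of_card_le hsub (by rw [hcard]; exact hM B hB)).symm
    rwa [← this]
  · rintro ⟨hlt, hmem⟩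
    refine ⟨hlt, {a.1, a.2}, hmem, by simp, by simp, ?_⟩
    intro c hc
    rcases Finset.mem_insert.mp hc with rfl | hc
    · omega
    · rw [Finset.mem_singleton.mp hc]; omega

lemma pair_eq_of_block {p q : ℕ × ℕ} (hp : p.1 < p.2) (hq : q.1 < q.2)
    (h : ({p.1, p.2} : Finset ℕ) = {q.1, q.2}) : p = q := by
  have h1 : p.1 = q.1 ∨ p.1 = q.2 := by
    have : p.1 ∈ ({q.1, q.2} : Finset ℕ) := h ▸ (by simp)
    simpa using this
  have h2 : p.2 = q.1 ∨ p.2 = q.2 := by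
    have : p.2 ∈ ({q.1, q.2} : Finset ℕ) := h ▸ (by simp)
    simpa using this
  have h3 : q.1 = p.1 ∨ q.1 = p.2 := by
    have : q.1 ∈ ({p.1, p.2} : Finset ℕ) := h ▸ (by simp)
    simpa using this
  have : p.1 = q.1 ∧ p.2 = q.2 := by omega
  exact Prod.ext this.1 this.2

/-- the blocks of a matching are determined: arc blocks and singletons. -/
lemma parts_char {n : ℕ} {P : Finpartition (Finset.Icc 1 n)} (hM : IsMatching P)
    (B : Finset ℕ) :
    B ∈ P.parts ↔
      ((∃ a ∈ toArcs P, B = {a.1, a.2}) ∨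
        (∃ x ∈ Finset.Icc 1 n, B = {x} ∧ ∀ a ∈ toArcs P, x ≠ a.1 ∧ x ≠ a.2)) := by
  constructor
  · intro hB
    have hne : B.Nonempty := P.nonempty_of_mem_parts hB
    have hc2 : B.card ≤ 2 := hM B hB
    have hc1 : 1 ≤ B.card := Finset.card_pos.mpr hne
    interval_cases h : B.card
    · -- card 1
      obtain ⟨x, rfl⟩ := Finset.card_eq_one.mp h
      right
      refine ⟨x, P.le hB (by simp), rfl, ?_⟩
      intro a ha
      have harc := mem_toArcs.mp ha
      rw [isArc_iff_of_matching hM] at harc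
      constructor
      · rintro rfl
        have heq := P.eq_of_mem_parts hB harc.2 (Finset.mem_singleton_self a.1)
          (Finset.mem_insert_self a.1 {a.2})
        have h2 : a.2 ∈ ({a.1} : Finset ℕ) := by
          rw [heq]; exact Finset.mem_insert_of_mem (Finset.mem_singleton_self a.2)
        simp at h2
        omega
      · rintro rfl
        have heq := P.eq_of_mem_parts hB harc.2 (Finset.mem_singleton_self a.2)
          (Finset.mem_insert_of_mem (Finset.mem_singleton_self a.2))
        have h1 : a.1 ∈ ({a.2} : Finset ℕ) := by
          rw [heq]; exact Finset.mem_insert_self a.1 {a.2}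
        simp at h1
        omega
    · -- card 2
      obtain ⟨u, v, huv, rfl⟩ := Finset.card_eq_two.mp h
      left
      rcases le_total u v with hle | hle
      · refine ⟨(u, v), ?_, rfl⟩
        rw [mem_toArcs]
        refine ⟨by simp; omega, {u, v}, hB, by simp, by simp, ?_⟩
        intro c hc
        rcases Finset.mem_insert.mp hc with rfl | hc
        · simp
        · rw [Finset.mem_singleton.mp hc]; simp
      · refine ⟨(v, u), ?_, Finset.pair_comm u v⟩
        rw [mem_toArcs]
        refine ⟨by simp; omega, {u, v}, hB, by simp, by simp, ?_⟩
        intro c hc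
        rcases Finset.mem_insert.mp hc with rfl | hc
        · simp
        · rw [Finset.mem_singleton.mp hc]; simp
  · rintro (⟨a, ha, rfl⟩ | ⟨x, hx, rfl, hxa⟩)
    · exact ((isArc_iff_of_matching hM).mp (mem_toArcs.mp ha)).2
    · obtain ⟨B, hB, hxB⟩ := P.exists_mem hx
      have hc2 : B.card ≤ 2 := hM B hB
      have : B = {x} := by
        apply Finset.eq_singleton_iff_unique_mem.mpr
        refine ⟨hxB, ?_⟩
        intro y hy
        by_contra hne
        have hcge : ({y, x} : Finset ℕ) ⊆ B := by
          intro z hz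
          rcases Finset.mem_insert.mp hz with rfl | hz
          · exact hy
          · rw [Finset.mem_singleton.mp hz]; exact hxB
        have : B = {y, x} := (Finset.eq_of_subset_of_card_le hcge (by
          rw [Finset.card_insert_of_notMem (by simpa using hne), Finset.card_singleton]
          exact hc2)).symm
        -- so there is an arc with x as endpoint
        rcases Ne.lt_or_gt hne with hyx | hyx
        · have harc : IsArc P (y, x) := by
            refine ⟨by simpa using hyx, B, hB, hy, hxB, ?_⟩
            intro c hc
            rw [this] at hc
            rcases Finset.mem_insert.mp hc with rfl | hc
            · simp
            · rw [Finset.mem_singleton.mp hc]; simp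
          exact (hxa _ (mem_toArcs.mpr harc)).2 rfl
        · have harc : IsArc P (x, y) := by
            refine ⟨by simpa using hyx, B, hB, hxB, hy, ?_⟩
            intro c hc
            rw [this] at hc
            rcases Finset.mem_insert.mp hc with rfl | hc
            · simp
            · rw [Finset.mem_singleton.mp hc]; simp
          exact (hxa _ (mem_toArcs.mpr harc)).1 rfl
      rwa [← this]

def partsOf (n : ℕ) (M : Finset (ℕ × ℕ)) : Finset (Finset ℕ) :=
  M.image (fun p => ({p.1, p.2} : Finset ℕ)) ∪
    ((Finset.Icc 1 n \ (M.image Prod.fst ∪ M.image Prod.snd)).image (fun x => {x}))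

lemma exists_partition (n : ℕ) (M : Finset (ℕ × ℕ)) (hA : ArcCond n M) :
    ∃ P : Finpartition (Finset.Icc 1 n), IsMatching P ∧ toArcs P = M := by
  classical
  obtain ⟨hb, hd, hal⟩ := hA
  have hmem : ∀ B, B ∈ partsOf n M ↔
      ((∃ p ∈ M, B = {p.1, p.2}) ∨
       (∃ x, x ∈ Finset.Icc 1 n ∧ x ∉ M.image Prod.fst ∪ M.image Prod.snd ∧ B = {x})) := by
    intro B
    rw [partsOf, Finset.mem_union]
    constructor
    · rintro (h | h)
      · obtain ⟨p, hp, rfl⟩ := Finset.mem_image.mp h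
        exact Or.inl ⟨p, hp, rfl⟩
      · obtain ⟨x, hx, rfl⟩ := Finset.mem_image.mp h
        rw [Finset.mem_sdiff] at hx
        exact Or.inr ⟨x, hx.1, hx.2, rfl⟩
    · rintro (⟨p, hp, rfl⟩ | ⟨x, hx1, hx2, rfl⟩)
      · exact Or.inl (Finset.mem_image.mpr ⟨p, hp, rfl⟩)
      · exact Or.inr (Finset.mem_image.mpr ⟨x, Finset.mem_sdiff.mpr ⟨hx1, hx2⟩, rfl⟩)
  have hSupIndep : (partsOf n M).SupIndep id := by
    rw [Finset.supIndep_iff_pairwiseDisjoint]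
    intro B hB C hC hne
    simp only [Function.onFun, id_eq]
    rw [Finset.disjoint_left]
    intro x hxB hxC
    rw [Finset.mem_coe, hmem] at hB hC
    rcases hB with ⟨p, hp, rfl⟩ | ⟨y, hy1, hy2, rfl⟩ <;>
      rcases hC with ⟨q, hq, rfl⟩ | ⟨z, hz1, hz2, rfl⟩
    · by_cases hpq : p = q
      · subst hpq; exact hne rfl
      · obtain ⟨d1, d2, d3, d4⟩ := hd p hp q hq hpq
        simp only [Finset.mem_insert, Finset.mem_singleton] at hxB hxC
        rcases hxB with rfl | rfl <;> rcases hxC with h | h <;> omega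
    · simp only [Finset.mem_insert, Finset.mem_singleton] at hxB hxC
      subst hxC
      apply hz2
      rcases hxB with h | h
      · exact Finset.mem_union_left _ (Finset.mem_image.mpr ⟨p, hp, h.symm⟩)
      · exact Finset.mem_union_right _ (Finset.mem_image.mpr ⟨p, hp, h.symm⟩)
    · simp only [Finset.mem_insert, Finset.mem_singleton] at hxB hxC
      subst hxB
      apply hy2
      rcases hxC with h | h
      · exact Finset.mem_union_left _ (Finset.mem_image.mpr ⟨q, hq, h.symm⟩)
      · exact Finset.mem_union_right _ (Finset.mem_image.mpr ⟨q, hq, h.symm⟩)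
    · simp only [Finset.mem_singleton] at hxB hxC
      subst hxB; subst hxC
      exact hne rfl
  have hSup : (partsOf n M).sup id = Finset.Icc 1 n := by
    ext x
    rw [Finset.mem_sup]
    constructor
    · rintro ⟨B, hB, hxB⟩
      rw [hmem] at hB
      rcases hB with ⟨p, hp, rfl⟩ | ⟨y, hy1, hy2, rfl⟩
      · have := hb p hp
        simp only [id_eq, Finset.mem_insert, Finset.mem_singleton] at hxB
        rw [Finset.mem_Icc]
        rcases hxB with rfl | rfl <;> omega
      · simp only [id_eq, Finset.mem_singleton] at hxB
        subst hxB; exact hy1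
    · intro hx
      by_cases hxe : x ∈ M.image Prod.fst ∪ M.image Prod.snd
      · rcases Finset.mem_union.mp hxe with h | h
        · obtain ⟨p, hp, rfl⟩ := Finset.mem_image.mp h
          exact ⟨{p.1, p.2}, (hmem _).mpr (Or.inl ⟨p, hp, rfl⟩), by simp⟩
        · obtain ⟨p, hp, rfl⟩ := Finset.mem_image.mp h
          exact ⟨{p.1, p.2}, (hmem _).mpr (Or.inl ⟨p, hp, rfl⟩), by simp⟩
      · exact ⟨{x}, (hmem _).mpr (Or.inr ⟨x, hx, hxe, rfl⟩), by simp⟩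
  have hBot : ⊥ ∉ partsOf n M := by
    intro h
    rw [hmem] at h
    rcases h with ⟨p, hp, hpe⟩ | ⟨x, _, _, hxe⟩
    · exact (Finset.insert_ne_empty _ _) hpe.symm
    · exact (Finset.singleton_ne_empty _) hxe.symm
  refine ⟨⟨partsOf n M, hSupIndep, hSup, hBot⟩, ?_, ?_⟩
  · intro B hB
    rw [show (⟨partsOf n M, hSupIndep, hSup, hBot⟩ : Finpartition _).parts = partsOf n M
      from rfl, hmem] at hB
    rcases hB with ⟨p, hp, rfl⟩ | ⟨x, _, _, rfl⟩
    · simpa using Finset.card_insert_le p.1 {p.2}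
    · simp
  · have hMatch : IsMatching (⟨partsOf n M, hSupIndep, hSup, hBot⟩ :
        Finpartition (Finset.Icc 1 n)) := by
      intro B hB
      rw [show (⟨partsOf n M, hSupIndep, hSup, hBot⟩ : Finpartition _).parts = partsOf n M
        from rfl, hmem] at hB
      rcases hB with ⟨p, hp, rfl⟩ | ⟨x, _, _, rfl⟩
      · simpa using Finset.card_insert_le p.1 {p.2}
      · simp
    ext a
    rw [mem_toArcs, isArc_iff_of_matching hMatch]
    constructor
    · rintro ⟨hlt, hpart⟩
      rw [show (⟨partsOf n M, hSupIndep, hSup, hBot⟩ : Finpartition _).parts = partsOf n M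
        from rfl, hmem] at hpart
      rcases hpart with ⟨p, hp, hpe⟩ | ⟨x, _, _, hxe⟩
      · have := hb p hp
        have : a = p := pair_eq_of_block hlt this.2.1 hpe
        rwa [this]
      · have h1 : a.1 ∈ ({x} : Finset ℕ) := hxe ▸ Finset.mem_insert_self _ _
        have h2 : a.2 ∈ ({x} : Finset ℕ) :=
          hxe ▸ Finset.mem_insert_of_mem (Finset.mem_singleton_self _)
        simp at h1 h2
        omega
    · intro ha
      refine ⟨(hb a ha).2.1, ?_⟩
      rw [show (⟨partsOf n M, hSupIndep, hSup, hBot⟩ : Finpartition _).parts = partsOf n M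
        from rfl, hmem]
      exact Or.inl ⟨a, ha, rfl⟩

lemma toArcs_mem_ASet {n k : ℕ} {P : Finpartition (Finset.Icc 1 n)}
    (h1 : IsMatching P) (h2 : numArcs P = k) (h3 : ¬ HasNbrAlign P) :
    toArcs P ∈ ASet n k := by
  classical
  refine mem_ASet.mpr ⟨⟨?_, ?_, ?_⟩, ?_⟩
  · intro p hp
    have hsq := (Finset.mem_filter.mp hp).1
    have harc := mem_toArcs.mp hp
    rw [Finset.mem_product, Finset.mem_Icc, Finset.mem_Icc] at hsq
    exact ⟨hsq.1.1, harc.1, hsq.2.2⟩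
  · intro p hp q hq hne
    have harcp := (isArc_iff_of_matching h1).mp (mem_toArcs.mp hp)
    have harcq := (isArc_iff_of_matching h1).mp (mem_toArcs.mp hq)
    have key : ∀ x, x ∈ ({p.1, p.2} : Finset ℕ) → x ∈ ({q.1, q.2} : Finset ℕ) → False := by
      intro x hxp hxq
      have := P.eq_of_mem_parts harcp.2 harcq.2 hxp hxq
      exact hne (pair_eq_of_block harcp.1 harcq.1 this)
    refine ⟨?_, ?_, ?_, ?_⟩ <;> intro h
    · exact key p.1 (by simp) (by rw [h]; simp)
    · exact key p.1 (by simp) (by rw [h]; simp)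
    · exact key p.2 (by simp) (by rw [h]; simp)
    · exact key p.2 (by simp) (by rw [h]; simp)
  · intro p hp q hq h
    exact h3 ⟨p, q, mem_toArcs.mp hp, mem_toArcs.mp hq, h⟩
  · rw [← numArcs_eq, h2]

theorem Pnum_eq_ASet_card (n k : ℕ) : Pnum n k = (ASet n k).card := by
  classical
  have hinj : Set.InjOn toArcs
      {P : Finpartition (Finset.Icc 1 n) |
        IsMatching P ∧ numArcs P = k ∧ ¬ HasNbrAlign P} := by
    intro P hP Q hQ h
    apply Finpartition.ext
    ext B
    rw [parts_char hP.1, parts_char hQ.1, h]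
  have himg : toArcs '' {P : Finpartition (Finset.Icc 1 n) |
      IsMatching P ∧ numArcs P = k ∧ ¬ HasNbrAlign P} = ↑(ASet n k) := by
    ext M
    constructor
    · rintro ⟨P, hP, rfl⟩
      exact toArcs_mem_ASet hP.1 hP.2.1 hP.2.2
    · intro hM
      have hM' := mem_ASet.mp hM
      obtain ⟨P, hMatch, hArcs⟩ := exists_partition n M hM'.1
      refine ⟨P, ⟨hMatch, ?_, ?_⟩, hArcs⟩
      · rw [numArcs_eq, hArcs, hM'.2]
      · rintro ⟨a, b, ha, hb, h⟩
        rw [← mem_toArcs, hArcs] at ha hb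
        exact hM'.1.2.2 a ha b hb h
  rw [Pnum, ← Set.ncard_coe_finset, ← himg, Set.ncard_image_of_injOn hinj]

open Classical in
lemma ASet_card_rec (n k : ℕ) (hn : 2 ≤ n) :
    (ASet n (k+1)).card = (ASet (n-1) (k+1)).card + (n-(k+1)) * (ASet (n-2) k).card := by
  classical
  have h := Finset.card_filter_add_card_filter_not (s := ASet n (k+1))
    (p := fun M => ∀ p ∈ M, p.2 ≠ n)
  rw [ASet_filter_notTop n (k+1) (by omega), ASet_filter_top_card n k hn] at h
  omega

lemma ASet_card_eq : ∀ n k, (ASet n k).card = Esum n k := by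
  intro n
  induction n using Nat.strong_induction_on with
  | _ n ih =>
    intro k
    match k with
    | 0 => rw [ASet_zero, Esum_zero, Finset.card_singleton]
    | k + 1 =>
      by_cases hn : n ≤ 1
      · rw [ASet_small n (k+1) (by omega) hn, Esum_small n (k+1) (by omega) hn,
          Finset.card_empty]
      · have hn2 : 2 ≤ n := by omega
        rw [ASet_card_rec n k hn2, ih (n-1) (by omega) (k+1), ih (n-2) (by omega) k,
          Esum_rec n k hn2]

/-- `P(n,k)` equals the elementary symmetric polynomial `e_k(1, 2, ..., n-k)`. -/
theorem stmt_1 (n k : ℕ) (hn : 1 ≤ n) (hk : k ≤ n / 2) :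
    Pnum n k = ∑ S ∈ (Finset.Icc 1 (n - k)).powersetCard k, ∏ x ∈ S, x := by
  rw [Pnum_eq_ASet_card, ASet_card_eq]
  rfl
end
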